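/- For all n ≥ 1: t(4n) = 2t(n-1) + a(n), t(4n+1) = 2t(n-1), t(4n+2) = t(n) + t(n-1), and for all n ≥ 0: t(4n+3) = 2t(n). -/
import Mathlib

def rs : ℕ → ℤ
  | 0 => 1
  | (n+1) =>
    if (n+1) % 2 = 0 then rs ((n+1)/2)
    else (-1)^((n+1)/2) * rs ((n+1)/2)
decreasing_by all_goals exact Nat.div_lt_self (Nat.succ_pos n) (by norm_num)

def s (n : ℕ) : ℤ := ∑ i ∈ Finset.range (n+1), rs i

def t (n : ℕ) : ℤ := ∑ i ∈ Finset.range (n+1), (-1)^i * rs i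

lemma rs_even (n : ℕ) : rs (2*n+2) = rs (n+1) := by
  have : 2*n+2 = (2*n+1)+1 := by ring
  rw [this, rs]
  have h1 : (2*n+1+1) % 2 = 0 := by omega
  have h2 : (2*n+1+1) / 2 = n+1 := by omega
  simp [h1, h2]

lemma rs_odd (n : ℕ) : rs (2*n+1) = (-1)^n * rs n := by
  rw [rs]
  have h1 : (2*n+1) % 2 ≠ 0 := by omega
  have h2 : (2*n+1) / 2 = n := by omega
  simp [h1, h2]

lemma t_succ (n : ℕ) : t (n+1) = t n + (-1)^(n+1) * rs (n+1) :=
  Finset.sum_range_succ _ _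

lemma key : ∀ n : ℕ, t (4*n+3) = 2 * t n := by
  intro n
  induction n with
  | zero => norm_num [t, Finset.sum_range_succ, rs]
  | succ m ih =>
    have h7 : 4*(m+1)+3 = (4*m+6)+1 := by ring
    rw [h7, t_succ, show 4*m+6 = (4*m+5)+1 by ring, t_succ,
      show 4*m+5 = (4*m+4)+1 by ring, t_succ,
      show 4*m+4 = (4*m+3)+1 by ring, t_succ, ih, t_succ]
    have r4 : rs (4*m+3+1) = rs (m+1) := by
      rw [show 4*m+3+1 = 2*(2*m+1)+2 by ring, rs_even,
        show 2*m+1+1 = 2*m+2 by ring, rs_even]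
    have r5 : rs (4*m+4+1) = rs (m+1) := by
      rw [show 4*m+4+1 = 2*(2*m+2)+1 by ring, rs_odd,
        show 2*m+2 = 2*(m)+2 by ring, rs_even]
      have : ((-1:ℤ))^(2*m+2) = 1 := Even.neg_one_pow ⟨m+1, by ring⟩
      rw [this]; ring
    have r6 : rs (4*m+5+1) = (-1)^(m+1) * rs (m+1) := by
      rw [show 4*m+5+1 = 2*(2*m+2)+2 by ring, rs_even,
        show 2*m+2+1 = 2*(m+1)+1 by ring, rs_odd]
    have r7 : rs (4*m+6+1) = -((-1)^(m+1) * rs (m+1)) := by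
      rw [show 4*m+6+1 = 2*(2*m+3)+1 by ring, rs_odd,
        show 2*m+3 = 2*(m+1)+1 by ring, rs_odd]
      have : ((-1:ℤ))^(2*(m+1)+1) = -1 := Odd.neg_one_pow ⟨m+1, by ring⟩
      rw [this]; ring
    rw [r4, r5, r6, r7]
    have e4 : ((-1:ℤ))^(4*m+3+1) = 1 := Even.neg_one_pow ⟨2*m+2, by ring⟩
    have e5 : ((-1:ℤ))^(4*m+4+1) = -1 := Odd.neg_one_pow ⟨2*m+2, by ring⟩
    have e6 : ((-1:ℤ))^(4*m+5+1) = 1 := Even.neg_one_pow ⟨2*m+3, by ring⟩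
    have e7 : ((-1:ℤ))^(4*m+6+1) = -1 := Odd.neg_one_pow ⟨2*m+3, by ring⟩
    rw [e4, e5, e6, e7]; ring

theorem stmt4 : (∀ n : ℕ, 1 ≤ n →
      t (4*n) = 2 * t (n-1) + rs n ∧
      t (4*n+1) = 2 * t (n-1) ∧
      t (4*n+2) = t n + t (n-1)) ∧
    (∀ n : ℕ, t (4*n+3) = 2 * t n) := by
  refine ⟨?_, key⟩
  intro n hn
  obtain ⟨m, rfl⟩ : ∃ m, n = m + 1 := ⟨n-1, by omega⟩
  simp only [Nat.add_sub_cancel]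
  have k7 : t (4*m+7) = 2 * t (m+1) := by
    have := key (m+1); rwa [show 4*(m+1)+3 = 4*m+7 by ring] at this
  have r7 : rs (4*m+7) = -((-1)^(m+1) * rs (m+1)) := by
    rw [show 4*m+7 = 2*(2*m+3)+1 by ring, rs_odd,
      show 2*m+3 = 2*(m+1)+1 by ring, rs_odd]
    have : ((-1:ℤ))^(2*(m+1)+1) = -1 := Odd.neg_one_pow ⟨m+1, by ring⟩
    rw [this]; ring
  have r6 : rs (4*m+6) = (-1)^(m+1) * rs (m+1) := by
    rw [show 4*m+6 = 2*(2*m+2)+2 by ring, rs_even,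
      show 2*m+2+1 = 2*(m+1)+1 by ring, rs_odd]
  have r5 : rs (4*m+5) = rs (m+1) := by
    rw [show 4*m+5 = 2*(2*m+2)+1 by ring, rs_odd, show 2*m+2 = 2*m+2 by rfl, rs_even]
    have : ((-1:ℤ))^(2*m+2) = 1 := Even.neg_one_pow ⟨m+1, by ring⟩
    rw [this]; ring
  have h6 : t (4*m+7) = t (4*m+6) + (-1)^(4*m+7) * rs (4*m+7) := by
    have := t_succ (4*m+6); rwa [show 4*m+6+1 = 4*m+7 by ring] at this
  have h5 : t (4*m+6) = t (4*m+5) + (-1)^(4*m+6) * rs (4*m+6) := by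
    have := t_succ (4*m+5); rwa [show 4*m+5+1 = 4*m+6 by ring] at this
  have h4 : t (4*m+5) = t (4*m+4) + (-1)^(4*m+5) * rs (4*m+5) := by
    have := t_succ (4*m+4); rwa [show 4*m+4+1 = 4*m+5 by ring] at this
  have hm : t (m+1) = t m + (-1)^(m+1) * rs (m+1) := t_succ m
  have e7 : ((-1:ℤ))^(4*m+7) = -1 := Odd.neg_one_pow ⟨2*m+3, by ring⟩
  have e6 : ((-1:ℤ))^(4*m+6) = 1 := Even.neg_one_pow ⟨2*m+3, by ring⟩
  have e5 : ((-1:ℤ))^(4*m+5) = -1 := Odd.neg_one_pow ⟨2*m+2, by ring⟩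
  rw [e7, r7] at h6; rw [e6, r6] at h5; rw [e5, r5] at h4
  refine ⟨?_, ?_, ?_⟩
  · rw [show 4*(m+1) = 4*m+4 by ring]
    have : t (4*m+4) = 2 * t m + rs (m+1) := by
      have := h4; have := h5; have := h6; linarith [hm]
    linarith [hm, this]
  · rw [show 4*(m+1)+1 = 4*m+5 by ring]; linarith [hm]
  · rw [show 4*(m+1)+2 = 4*m+6 by ring]; linarith [hm]
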